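/- Let G be a connected finite simple graph on n vertices with even diameter d in which no two distinct vertices have equal neighborhoods, let P = v_1 ∼ v_2 ∼ ⋯ ∼ v_{d+1} be a diameter path of G, and suppose η(G) = n − d − 1. Then no vertex of G outside P has exactly two neighbors on P. -/

import Mathlib

open Classical in
/-- The adjacency matrix of a finite simple graph over `ℝ`. -/
noncomputable def adjMat {V : Type} [Fintype V] (G : SimpleGraph V) : Matrix V V ℝ :=
  Matrix.of fun i j => if G.Adj i j then (1 : ℝ) else 0

/-- The nullity `η(G)` of a finite simple graph: the dimension of the kernel of
its adjacency matrix over `ℝ`. -/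
noncomputable def nullity {V : Type} [Fintype V] (G : SimpleGraph V) : ℕ :=
  Module.finrank ℝ (LinearMap.ker (adjMat G).mulVecLin)

section Aux

/-- Kernel dimension bound: if every kernel vector vanishing outside `S` and at `v₀`
is zero, then the kernel has dimension at most `#Sᶜ + 1`. -/
lemma finrank_ker_le_aux {V : Type} [Fintype V] [DecidableEq V] (M : Matrix V V ℝ)
    (S : Finset V) (v₀ : V)
    (h : ∀ v : V → ℝ, M.mulVec v = 0 → (∀ w, w ∉ S → v w = 0) → v v₀ = 0 → v = 0) :
    Module.finrank ℝ (LinearMap.ker M.mulVecLin) ≤ Sᶜ.card + 1 := by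
  classical
  let f : (LinearMap.ker M.mulVecLin) →ₗ[ℝ] ((Sᶜ : Finset V) → ℝ) × ℝ :=
    { toFun := fun v => (fun w => (v : V → ℝ) w, (v : V → ℝ) v₀)
      map_add' := by intro a b; rfl
      map_smul' := by intro a b; rfl }
  have hf : Function.Injective f := by
    intro a b hab
    ext w
    have h1 : ∀ w : (Sᶜ : Finset V), (a : V → ℝ) w = (b : V → ℝ) w := by
      intro w; exact congrFun (congrArg Prod.fst (by exact hab)) w
    have h2 : (a : V → ℝ) v₀ = (b : V → ℝ) v₀ := congrArg Prod.snd hab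
    have hker : M.mulVec ((a : V → ℝ) - (b : V → ℝ)) = 0 := by
      have ha := a.2; have hb := b.2
      rw [LinearMap.mem_ker] at ha hb
      have : M.mulVecLin ((a : V → ℝ) - (b : V → ℝ)) = 0 := by
        rw [map_sub, ha, hb, sub_zero]
      rwa [Matrix.mulVecLin_apply] at this
    have := h _ hker (fun w hw => by
        have := h1 ⟨w, by simpa using hw⟩
        simp [this])
      (by simp [h2])
    have := congrFun this w
    simpa [sub_eq_zero] using this
  calc Module.finrank ℝ (LinearMap.ker M.mulVecLin) ≤
      Module.finrank ℝ (((Sᶜ : Finset V) → ℝ) × ℝ) :=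
        LinearMap.finrank_le_finrank_of_injective hf
    _ = Sᶜ.card + 1 := by
        rw [Module.finrank_prod, Module.finrank_pi, Module.finrank_self, Fintype.card_coe]

/-- Kernel dimension bound: if every kernel vector vanishing outside `S`
is zero, then the kernel has dimension at most `#Sᶜ`. -/
lemma finrank_ker_le_aux' {V : Type} [Fintype V] [DecidableEq V] (M : Matrix V V ℝ)
    (S : Finset V)
    (h : ∀ v : V → ℝ, M.mulVec v = 0 → (∀ w, w ∉ S → v w = 0) → v = 0) :
    Module.finrank ℝ (LinearMap.ker M.mulVecLin) ≤ Sᶜ.card := by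
  classical
  let f : (LinearMap.ker M.mulVecLin) →ₗ[ℝ] ((Sᶜ : Finset V) → ℝ) :=
    { toFun := fun v => fun w => (v : V → ℝ) w
      map_add' := by intro a b; rfl
      map_smul' := by intro a b; rfl }
  have hf : Function.Injective f := by
    intro a b hab
    ext w
    have h1 : ∀ w : (Sᶜ : Finset V), (a : V → ℝ) w = (b : V → ℝ) w := by
      intro w; exact congrFun (by exact hab) w
    have hker : M.mulVec ((a : V → ℝ) - (b : V → ℝ)) = 0 := by
      have ha := a.2; have hb := b.2
      rw [LinearMap.mem_ker] at ha hb
      have : M.mulVecLin ((a : V → ℝ) - (b : V → ℝ)) = 0 := by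
        rw [map_sub, ha, hb, sub_zero]
      rwa [Matrix.mulVecLin_apply] at this
    have := h _ hker (fun w hw => by
        have := h1 ⟨w, by simpa using hw⟩
        simp [this])
    have := congrFun this w
    simpa [sub_eq_zero] using this
  calc Module.finrank ℝ (LinearMap.ker M.mulVecLin) ≤
      Module.finrank ℝ (((Sᶜ : Finset V) → ℝ)) :=
        LinearMap.finrank_le_finrank_of_injective hf
    _ = Sᶜ.card := by rw [Module.finrank_pi, Fintype.card_coe]

lemma rec2_aux (d s : ℕ) (a : ℕ → ℝ) (b : ℝ) (h0 : a 0 = 0) (h1 : a 1 = 0)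
    (hrec : ∀ i, i ≤ d → a i + a (i+2) + (if i = s ∨ i = s+2 then b else 0) = 0) :
    ∀ j, j ≤ d + 2 → a j = if j = s + 2 then -b else 0 := by
  intro j
  induction j using Nat.strong_induction_on with
  | _ j ih =>
    intro hj
    match j, hj with
    | 0, _ => simp [h0]
    | 1, _ => simp [h1]
    | (k+2), hk =>
      have hk' : k ≤ d := by omega
      have h := hrec k hk'
      have hak : a k = if k = s + 2 then -b else 0 := ih k (by omega) (by omega)
      rw [hak] at h
      by_cases h1' : k = s
      · subst h1'
        rw [if_pos rfl]
        rw [if_neg (by omega), if_pos (Or.inl rfl)] at h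
        linarith
      · rw [if_neg (by omega)]
        by_cases h2' : k = s + 2
        · rw [if_pos h2', if_pos (Or.inr h2')] at h
          linarith
        · rw [if_neg h2', if_neg (by tauto)] at h
          linarith

lemma rec1_aux (d : ℕ) (a : ℕ → ℝ) (h0 : a 0 = 0)
    (hrec : ∀ i, i ≤ d → a i + a (i+2) = 0) :
    ∀ j, j ≤ d + 2 → a j = if j % 2 = 1 then (-1 : ℝ)^(j/2) * a 1 else 0 := by
  intro j
  induction j using Nat.strong_induction_on with
  | _ j ih =>
    intro hj
    match j, hj with
    | 0, _ => simpa using h0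
    | 1, _ => norm_num
    | (k+2), hk =>
      have h := hrec k (by omega)
      have hak : a k = if k % 2 = 1 then (-1 : ℝ)^(k/2) * a 1 else 0 := ih k (by omega) (by omega)
      have hmod : (k+2) % 2 = k % 2 := by omega
      have hdiv : (k+2) / 2 = k / 2 + 1 := by omega
      rw [hmod, hdiv]
      by_cases hpar : k % 2 = 1
      · rw [if_pos hpar] at hak ⊢
        rw [hak] at h
        rw [pow_succ]
        linarith
      · rw [if_neg hpar] at hak ⊢
        rw [hak] at h
        linarith

lemma telescope_b_aux (d s : ℕ) (hd : Even d) (hs : s + 1 ≤ d) (a : ℕ → ℝ) (b : ℝ)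
    (h0 : a 0 = 0) (htop : a (d + 2) = 0)
    (hrec : ∀ i, i ≤ d → a i + a (i+2) + (if i = s ∨ i = s+1 then b else 0) = 0) :
    b = 0 := by
  obtain ⟨m, hm⟩ := hd
  have hsum1 : ∑ k ∈ Finset.range (m+1),
      ((-1:ℝ)^k * a (2*k) - (-1:ℝ)^(k+1) * a (2*(k+1))) = 0 := by
    rw [Finset.sum_range_sub' (f := fun k => (-1:ℝ)^k * a (2*k))]
    have h2 : 2*(m+1) = d + 2 := by omega
    rw [h2, htop, h0]
    ring
  have hsum2 : ∑ k ∈ Finset.range (m+1),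
      ((-1:ℝ)^k * (a (2*k) + a (2*k+2) + (if 2*k = s ∨ 2*k = s+1 then b else 0))) = 0 := by
    apply Finset.sum_eq_zero
    intro k hk
    rw [Finset.mem_range] at hk
    rw [hrec (2*k) (by omega)]
    ring
  have hdiff : ∑ k ∈ Finset.range (m+1),
      ((-1:ℝ)^k * (if 2*k = s ∨ 2*k = s+1 then b else 0)) = 0 := by
    have heach : ∀ k ∈ Finset.range (m+1),
        ((-1:ℝ)^k * (if 2*k = s ∨ 2*k = s+1 then b else 0)) =
        ((-1:ℝ)^k * (a (2*k) + a (2*k+2) + (if 2*k = s ∨ 2*k = s+1 then b else 0)))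
          - ((-1:ℝ)^k * a (2*k) - (-1:ℝ)^(k+1) * a (2*(k+1))) := by
      intro k _
      have h2 : 2*(k+1) = 2*k+2 := by ring
      rw [h2]
      generalize (if 2*k = s ∨ 2*k = s+1 then b else 0) = c
      ring
    rw [Finset.sum_congr rfl heach, Finset.sum_sub_distrib, hsum2, hsum1, sub_zero]
  obtain ⟨u, hu⟩ : ∃ u, 2*u = s ∨ 2*u = s + 1 := by
    rcases Nat.even_or_odd s with ⟨u, hu⟩ | ⟨u, hu⟩
    · exact ⟨u, Or.inl (by omega)⟩
    · exact ⟨u + 1, Or.inr (by omega)⟩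
  have hunique : ∀ k ∈ Finset.range (m+1), k ≠ u →
      ((-1:ℝ)^k * (if 2*k = s ∨ 2*k = s+1 then b else 0)) = 0 := by
    intro k _ hk
    rw [if_neg (by omega)]
    ring
  rw [Finset.sum_eq_single_of_mem u (Finset.mem_range.mpr (by omega)) hunique] at hdiff
  rw [if_pos hu] at hdiff
  have hne : (-1:ℝ)^u ≠ 0 := by positivity
  exact (mul_eq_zero.mp hdiff).resolve_left hne

end Aux

/-- Let `G` be connected, twin-free, with even diameter `d`, let
`p 0 ∼ ⋯ ∼ p d` be a diameter path, and suppose `η(G) = n - d - 1`. Then no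
vertex outside the path has exactly two neighbours on the path. -/
theorem stmt15 {V : Type} [Fintype V] (G : SimpleGraph V) [DecidableRel G.Adj]
    (hG : G.Connected) (heven : Even G.diam)
    (hreduced : ∀ a b : V, G.neighborSet a = G.neighborSet b → a = b)
    (p : Fin (G.diam + 1) → V)
    (hadj : ∀ i : Fin G.diam, G.Adj (p i.castSucc) (p i.succ))
    (hdist : G.dist (p 0) (p (Fin.last G.diam)) = G.diam)
    (hnull : nullity G = Fintype.card V - G.diam - 1) :
    ∀ x : V, x ∉ Set.range p →
      (Finset.univ.filter fun i : Fin (G.diam + 1) => G.Adj x (p i)).card ≠ 2 := by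
  classical
  have hMdef : ∀ u w, (adjMat G) u w = if G.Adj u w then (1:ℝ) else 0 := by
    intro u w; unfold adjMat; rw [Matrix.of_apply]; congr!
  have hMsymm : ∀ u w, (adjMat G) u w = (adjMat G) w u := by
    intro u w; rw [hMdef, hMdef]
    simp only [G.adj_comm]
  have hnull' : Module.finrank ℝ (LinearMap.ker (adjMat G).mulVecLin)
      = Fintype.card V - G.diam - 1 := hnull
  revert heven hnull' p
  generalize G.diam = d
  intro heven p hadj hdist hnull'
  set M := adjMat G with hMM
  -- ℕ-indexed path
  have hqq : ∀ j, j % (d+1) < d + 1 := fun j => Nat.mod_lt _ (by omega)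
  set q : ℕ → V := fun j => p ⟨j % (d+1), hqq j⟩ with hqdef
  have hq : ∀ (j) (h : j ≤ d), q j = p ⟨j, by omega⟩ := by
    intro j hj
    simp only [hqdef]
    congr 1
    exact Fin.ext (Nat.mod_eq_of_lt (by omega))
  have hqadj : ∀ i, i + 1 ≤ d → G.Adj (q i) (q (i+1)) := by
    intro i hi
    rw [hq i (by omega), hq (i+1) hi]
    exact hadj ⟨i, by omega⟩
  have hq0 : q 0 = p 0 := by rw [hq 0 (by omega)]; congr 1
  have hqd : q d = p (Fin.last d) := by rw [hq d le_rfl]; congr 1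
  have hupper : ∀ i k, i + k ≤ d → G.dist (q i) (q (i+k)) ≤ k := by
    intro i k
    induction k with
    | zero => intro _; simp [SimpleGraph.dist_self]
    | succ k ih =>
      intro h
      calc G.dist (q i) (q (i+(k+1)))
          ≤ G.dist (q i) (q (i+k)) + G.dist (q (i+k)) (q (i+k+1)) := by
            have := hG.dist_triangle (u := q i) (v := q (i+k)) (w := q (i+k+1))
            convert this using 3
            omega
        _ ≤ k + 1 := by
            have h1 := ih (by omega)
            have h2 : G.dist (q (i+k)) (q (i+k+1)) ≤ 1 :=
              le_of_eq (SimpleGraph.dist_eq_one_iff_adj.mpr (hqadj (i+k) (by omega)))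
            omega
  have hdistq : ∀ i j, i ≤ j → j ≤ d → G.dist (q i) (q j) = j - i := by
    have hdd : G.dist (q 0) (q d) = d := by rw [hq0, hqd]; exact hdist
    have h0 : ∀ i, i ≤ d → G.dist (q 0) (q i) = i := by
      intro i hi
      have h1 : G.dist (q 0) (q i) ≤ i := by
        have := hupper 0 i (by omega); simpa using this
      have h2 : G.dist (q i) (q d) ≤ d - i := by
        have := hupper i (d-i) (by omega)
        have heq : i + (d - i) = d := by omega
        rwa [heq] at this
      have h3 := hG.dist_triangle (u := q 0) (v := q i) (w := q d)
      omega
    intro i j hij hj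
    have h1 : G.dist (q i) (q j) ≤ j - i := by
      have := hupper i (j-i) (by omega)
      have heq : i + (j - i) = j := by omega
      rwa [heq] at this
    have h3 := hG.dist_triangle (u := q 0) (v := q i) (w := q j)
    have h4 := h0 i (by omega)
    have h5 := h0 j hj
    omega
  have hqinj : ∀ i, i ≤ d → ∀ j, j ≤ d → q i = q j → i = j := by
    intro i hi j hj hqe
    rcases Nat.lt_trichotomy i j with h | h | h
    · exfalso
      have := hdistq i j (by omega) hj
      rw [hqe, SimpleGraph.dist_self] at this
      omega
    · exact h
    · exfalso
      have := hdistq j i (by omega) hi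
      rw [hqe, SimpleGraph.dist_self] at this
      omega
  have hadjq : ∀ i j, i ≤ d → j ≤ d → (G.Adj (q i) (q j) ↔ (j = i+1 ∨ i = j+1)) := by
    intro i j hi hj
    constructor
    · intro h
      have h1 : G.dist (q i) (q j) = 1 := SimpleGraph.dist_eq_one_iff_adj.mpr h
      rcases le_or_gt i j with hle | hlt
      · have := hdistq i j hle hj; omega
      · have := hdistq j i (by omega) hi
        rw [SimpleGraph.dist_comm] at h1; omega
    · rintro (rfl | rfl)
      · exact hqadj i hj
      · exact (hqadj j hi).symm
  -- extraction of x, s, t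
  intro x hx hcard
  have hxq : ∀ j, j ≤ d → x ≠ q j := by
    intro j hj hxe
    exact hx ⟨⟨j, by omega⟩, by rw [hq j hj] at hxe; exact hxe.symm⟩
  obtain ⟨a, b, hab, hfil⟩ := Finset.card_eq_two.mp hcard
  have hmemf : ∀ i : Fin (d+1), G.Adj x (p i) ↔ (i = a ∨ i = b) := by
    intro i
    constructor
    · intro h
      have : i ∈ Finset.univ.filter fun i : Fin (d + 1) => G.Adj x (p i) :=
        Finset.mem_filter.mpr ⟨Finset.mem_univ _, h⟩
      rw [hfil] at this
      simpa using this
    · intro h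
      have : i ∈ ({a, b} : Finset (Fin (d+1))) := by simpa using h
      rw [← hfil] at this
      exact (Finset.mem_filter.mp this).2
  obtain ⟨s, t, hst, hsd, htd, hmem⟩ :
      ∃ s t, s < t ∧ s ≤ d ∧ t ≤ d ∧ ∀ j, j ≤ d → (G.Adj x (q j) ↔ (j = s ∨ j = t)) := by
    have hmq : ∀ j (h : j ≤ d), (G.Adj x (q j) ↔ ((j : ℕ) = a.val ∨ (j : ℕ) = b.val)) := by
      intro j h
      rw [hq j h, hmemf ⟨j, by omega⟩]
      constructor
      · rintro (h1 | h1)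
        · left; exact congrArg Fin.val h1
        · right; exact congrArg Fin.val h1
      · rintro (h1 | h1)
        · left; exact Fin.ext h1
        · right; exact Fin.ext h1
    rcases Nat.lt_or_ge a.val b.val with h | h
    · exact ⟨a.val, b.val, h, by omega, by omega, fun j hj => hmq j hj⟩
    · have : b.val < a.val := by
        rcases Nat.lt_or_ge b.val a.val with h' | h'
        · exact h'
        · exact absurd (Fin.ext (by omega) : a = b) hab
      exact ⟨b.val, a.val, this, by omega, by omega, fun j hj => (hmq j hj).trans or_comm⟩
  have hxs : G.Adj x (q s) := (hmem s hsd).mpr (Or.inl rfl)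
  have hxt : G.Adj x (q t) := (hmem t htd).mpr (Or.inr rfl)
  have ht2 : t = s + 1 ∨ t = s + 2 := by
    have h1 : G.dist (q s) (q t) ≤ 2 := by
      have h2 := hG.dist_triangle (u := q s) (v := x) (w := q t)
      have h3 : G.dist (q s) x ≤ 1 :=
        le_of_eq (SimpleGraph.dist_eq_one_iff_adj.mpr hxs.symm)
      have h4 : G.dist x (q t) ≤ 1 :=
        le_of_eq (SimpleGraph.dist_eq_one_iff_adj.mpr hxt)
      omega
    have := hdistq s t (by omega) htd
    omega
  -- matrix entry facts
  have hMq : ∀ i j, i ≤ d → j ≤ d →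
      M (q i) (q j) = if (j = i+1 ∨ i = j+1) then (1:ℝ) else 0 := by
    intro i j hi hj
    rw [hMdef]
    by_cases hc : j = i+1 ∨ i = j+1
    · rw [if_pos ((hadjq i j hi hj).mpr hc), if_pos hc]
    · rw [if_neg (fun h => hc ((hadjq i j hi hj).mp h)), if_neg hc]
  have hMxq : ∀ j, j ≤ d → M x (q j) = if (j = s ∨ j = t) then (1:ℝ) else 0 := by
    intro j hj
    rw [hMdef]
    by_cases hc : j = s ∨ j = t
    · rw [if_pos ((hmem j hj).mpr hc), if_pos hc]
    · rw [if_neg (fun h => hc ((hmem j hj).mp h)), if_neg hc]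
  have hMxx : M x x = 0 := by rw [hMdef, if_neg (G.irrefl)]
  -- the row-sum identity for supported vectors will be built per case
  rcases ht2 with ht1 | ht1
  · -- CASE t = s+1
    subst ht1
    set S : Finset V := (Finset.range (d+1)).image q ∪ {x} with hSdef
    have hxim : x ∉ (Finset.range (d+1)).image q := by
      rw [Finset.mem_image]
      rintro ⟨j, hj, hje⟩
      rw [Finset.mem_range] at hj
      exact hxq j (by omega) hje.symm
    have hScard : S.card = d + 2 := by
      rw [hSdef, Finset.card_union_of_disjoint (Finset.disjoint_singleton_right.mpr hxim)]
      rw [Finset.card_image_of_injOn (fun i hi j hj hij =>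
        hqinj i (by simpa using Nat.lt_succ_iff.mp (Finset.mem_range.mp hi)) j
          (by simpa using Nat.lt_succ_iff.mp (Finset.mem_range.mp hj)) hij)]
      simp
    have hkey : ∀ v : V → ℝ, M.mulVec v = 0 → (∀ w, w ∉ S → v w = 0) → v = 0 := by
      intro v hker hsupp
      set b := v x with hbdef
      set va : ℕ → ℝ := fun j => if 1 ≤ j ∧ j ≤ d + 1 then v (q (j-1)) else 0 with hvadef
      have hva : ∀ j, 1 ≤ j → j ≤ d+1 → va j = v (q (j-1)) := by
        intro j h1 h2; rw [hvadef]; simp only [if_pos (And.intro h1 h2)]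
      have hsum : ∀ w : V,
          (∑ j ∈ Finset.range (d+1), M w (q j) * v (q j)) + M w x * v x = 0 := by
        intro w
        have h0 : M.mulVec v w = 0 := congrFun hker w
        rw [Matrix.mulVec, dotProduct] at h0
        have h1 : ∑ u : V, M w u * v u = ∑ u ∈ S, M w u * v u :=
          (Finset.sum_subset (Finset.subset_univ S)
            (fun u _ hu => by rw [hsupp u hu, mul_zero])).symm
        rw [h1, hSdef, Finset.sum_union (Finset.disjoint_singleton_right.mpr hxim),
          Finset.sum_image (fun i hi j hj hij =>
            hqinj i (Nat.lt_succ_iff.mp (Finset.mem_range.mp hi)) j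
              (Nat.lt_succ_iff.mp (Finset.mem_range.mp hj)) hij),
          Finset.sum_singleton] at h0
        exact h0
      have hrowval : ∀ i, i ≤ d →
          ∑ j ∈ Finset.range (d+1), M (q i) (q j) * v (q j) = va i + va (i+2) := by
        intro i hi
        have hterm : ∀ j ∈ Finset.range (d+1), M (q i) (q j) * v (q j)
            = (if j = i+1 then v (q j) else 0) + (if j + 1 = i then v (q j) else 0) := by
          intro j hj
          rw [Finset.mem_range] at hj
          rw [hMq i j hi (by omega)]
          by_cases hc1 : j = i + 1
          · rw [if_pos (Or.inl hc1), if_pos hc1, if_neg (by omega), one_mul, add_zero]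
          · by_cases hc2 : i = j + 1
            · rw [if_pos (Or.inr hc2), if_neg hc1, if_pos (by omega), one_mul, zero_add]
            · rw [if_neg (by tauto), if_neg hc1, if_neg (by omega), zero_mul, add_zero]
        have hA : ∑ j ∈ Finset.range (d+1), (if j = i+1 then v (q j) else 0)
            = va (i+2) := by
          rw [Finset.sum_ite_eq' (Finset.range (d+1)) (i+1) (fun j => v (q j))]
          by_cases hc : i + 1 ≤ d
          · rw [if_pos (Finset.mem_range.mpr (by omega)), hva (i+2) (by omega) (by omega)]
            norm_num
          · rw [if_neg (by simp only [Finset.mem_range]; omega), hvadef]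
            simp only [if_neg (by omega : ¬(1 ≤ i+2 ∧ i + 2 ≤ d + 1))]
        have hB : ∑ j ∈ Finset.range (d+1), (if j + 1 = i then v (q j) else 0)
            = va i := by
          rcases Nat.eq_zero_or_pos i with rfl | hipos
          · rw [Finset.sum_eq_zero (fun j _ => by rw [if_neg (by omega)]), hvadef]
            simp only [if_neg (by omega : ¬(1 ≤ 0 ∧ (0:ℕ) ≤ d + 1))]
          · have hcong : ∀ j ∈ Finset.range (d+1), (if j + 1 = i then v (q j) else 0)
                = (if j = i - 1 then v (q j) else 0) := by
              intro j _
              by_cases hc : j + 1 = i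
              · rw [if_pos hc, if_pos (by omega)]
              · rw [if_neg hc, if_neg (by omega)]
            rw [Finset.sum_congr rfl hcong,
              Finset.sum_ite_eq' (Finset.range (d+1)) (i-1) (fun j => v (q j)),
              if_pos (Finset.mem_range.mpr (by omega)), hva i (by omega) (by omega)]
        rw [Finset.sum_congr rfl hterm, Finset.sum_add_distrib, hA, hB, add_comm]
      have heqP : ∀ i, i ≤ d → va i + va (i+2) + (if i = s ∨ i = s+1 then b else 0) = 0 := by
        intro i hi
        have h := hsum (q i)
        rw [hrowval i hi] at h
        have h2 : M (q i) x = if i = s ∨ i = s+1 then (1:ℝ) else 0 := by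
          rw [hMsymm]
          exact hMxq i hi
        rw [h2, ite_mul, one_mul, zero_mul] at h
        exact h
      have heqX : va (s+1) + va (s+2) = 0 := by
        have h := hsum x
        have hterm : ∀ j ∈ Finset.range (d+1), M x (q j) * v (q j)
            = (if j = s then v (q j) else 0) + (if j = s+1 then v (q j) else 0) := by
          intro j hj
          rw [Finset.mem_range] at hj
          rw [hMxq j (by omega)]
          by_cases hc1 : j = s
          · rw [if_pos (Or.inl hc1), if_pos hc1, if_neg (by omega), one_mul, add_zero]
          · by_cases hc2 : j = s+1
            · rw [if_pos (Or.inr hc2), if_neg hc1, if_pos hc2, one_mul, zero_add]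
            · rw [if_neg (by tauto), if_neg hc1, if_neg hc2, zero_mul, add_zero]
        rw [Finset.sum_congr rfl hterm, Finset.sum_add_distrib,
          Finset.sum_ite_eq' (Finset.range (d+1)) s (fun j => v (q j)),
          Finset.sum_ite_eq' (Finset.range (d+1)) (s+1) (fun j => v (q j)),
          if_pos (Finset.mem_range.mpr (by omega)),
          if_pos (Finset.mem_range.mpr (by omega)),
          hMxx, zero_mul, add_zero] at h
        rw [hva (s+1) (by omega) (by omega), hva (s+2) (by omega) (by omega)]
        simpa using h
      have hva0 : va 0 = 0 := by rw [hvadef]; simp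
      have hvatop : va (d+2) = 0 := by
        rw [hvadef]; simp only [if_neg (by omega : ¬(1 ≤ d+2 ∧ d + 2 ≤ d + 1))]
      have hb : b = 0 := telescope_b_aux d s heven (by omega) va b hva0 hvatop heqP
      have hrec := rec1_aux d va hva0 (fun i hi => by
        have h := heqP i hi
        rw [hb] at h
        simpa using h)
      have hva1 : va 1 = 0 := by
        have h1 := hrec (s+1) (by omega)
        have h2 := hrec (s+2) (by omega)
        rcases Nat.even_or_odd s with ⟨u, hu⟩ | ⟨u, hu⟩
        · rw [if_pos (by omega)] at h1
          rw [if_neg (by omega)] at h2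
          rw [h1, h2, add_zero] at heqX
          have hne : (-1:ℝ)^((s+1)/2) ≠ 0 := by positivity
          exact (mul_eq_zero.mp heqX).resolve_left hne
        · rw [if_neg (by omega)] at h1
          rw [if_pos (by omega)] at h2
          rw [h1, h2, zero_add] at heqX
          have hne : (-1:ℝ)^((s+2)/2) ≠ 0 := by positivity
          exact (mul_eq_zero.mp heqX).resolve_left hne
      have hvall : ∀ j, va j = 0 := by
        intro j
        by_cases hj : j ≤ d + 2
        · rw [hrec j hj]
          split_ifs
          · rw [hva1, mul_zero]
          · rfl
        · rw [hvadef]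
          simp only [if_neg (by omega : ¬(1 ≤ j ∧ j ≤ d + 1))]
      funext w
      by_cases hw : w ∈ S
      · rw [hSdef, Finset.mem_union] at hw
        rcases hw with hw | hw
        · rw [Finset.mem_image] at hw
          obtain ⟨j, hj, rfl⟩ := hw
          rw [Finset.mem_range] at hj
          have := hvall (j+1)
          rw [hva (j+1) (by omega) (by omega)] at this
          simpa using this
        · rw [Finset.mem_singleton] at hw
          subst hw
          exact hb
      · exact hsupp w hw
    -- conclude contradiction in case 1
    have hrank := finrank_ker_le_aux' M S hkey
    have hcompl : Sᶜ.card = Fintype.card V - S.card := Finset.card_compl S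
    have hSle : S.card ≤ Fintype.card V := Finset.card_le_univ S
    rw [hnull'] at hrank
    omega
  · -- CASE t = s+2
    subst ht1
    -- twin witness y
    have hxneq : x ≠ q (s+1) := hxq (s+1) (by omega)
    obtain ⟨y, hy⟩ : ∃ y, ¬(G.Adj x y ↔ G.Adj (q (s+1)) y) := by
      by_contra hcon
      push_neg at hcon
      apply hxneq
      apply hreduced
      ext z
      simp only [SimpleGraph.mem_neighborSet]
      exact hcon z
    have hyx : y ≠ x := by
      rintro rfl
      apply hy
      constructor
      · intro h; exact absurd h (G.irrefl)
      · intro h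
        exfalso
        have := (hmem (s+1) (by omega)).mp h.symm
        omega
    have hyq : ∀ j, j ≤ d → y ≠ q j := by
      intro j hj hye
      subst hye
      have h1 := hmem j hj
      have h2 := hadjq (s+1) j (by omega) hj
      exact hy ⟨fun hxy => h2.mpr (by have := h1.mp hxy; omega),
        fun hsj => h1.mpr (by have := h2.mp hsj; omega)⟩
    -- the support set
    set S : Finset V := (Finset.range (d+1)).image q ∪ {x, y} with hSdef
    have hxim : x ∉ (Finset.range (d+1)).image q := by
      rw [Finset.mem_image]
      rintro ⟨j, hj, hje⟩
      rw [Finset.mem_range] at hj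
      exact hxq j (by omega) hje.symm
    have hyim : y ∉ (Finset.range (d+1)).image q := by
      rw [Finset.mem_image]
      rintro ⟨j, hj, hje⟩
      rw [Finset.mem_range] at hj
      exact hyq j (by omega) hje.symm
    have hdisj : Disjoint ((Finset.range (d+1)).image q) ({x, y} : Finset V) := by
      rw [Finset.disjoint_right]
      intro u hu
      rw [Finset.mem_insert, Finset.mem_singleton] at hu
      rcases hu with rfl | rfl
      · exact hxim
      · exact hyim
    have hScard : S.card = d + 3 := by
      rw [hSdef, Finset.card_union_of_disjoint hdisj]
      rw [Finset.card_image_of_injOn (fun i hi j hj hij =>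
        hqinj i (Nat.lt_succ_iff.mp (Finset.mem_range.mp hi)) j
          (Nat.lt_succ_iff.mp (Finset.mem_range.mp hj)) hij)]
      rw [Finset.card_pair (Ne.symm hyx)]
      simp
    have hwitne : M x y - M (q (s+1)) y ≠ 0 := by
      rw [hMdef, hMdef]
      by_cases h1 : G.Adj x y
      · have h2 : ¬ G.Adj (q (s+1)) y := fun h => hy (iff_of_true h1 h)
        rw [if_pos h1, if_neg h2]
        norm_num
      · have h2 : G.Adj (q (s+1)) y := by
          by_contra h2
          exact hy (iff_of_false h1 h2)
        rw [if_neg h1, if_pos h2]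
        norm_num
    have hkey : ∀ v : V → ℝ, M.mulVec v = 0 → (∀ w, w ∉ S → v w = 0) →
        v (q 0) = 0 → v = 0 := by
      intro v hker hsupp hv0
      set b := v x with hbdef
      set va : ℕ → ℝ := fun j => if 1 ≤ j ∧ j ≤ d + 1 then v (q (j-1)) else 0 with hvadef
      have hva : ∀ j, 1 ≤ j → j ≤ d+1 → va j = v (q (j-1)) := by
        intro j h1 h2; rw [hvadef]; simp only [if_pos (And.intro h1 h2)]
      have hsum : ∀ w : V,
          (∑ j ∈ Finset.range (d+1), M w (q j) * v (q j))
            + (M w x * v x + M w y * v y) = 0 := by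
        intro w
        have h0 : M.mulVec v w = 0 := congrFun hker w
        rw [Matrix.mulVec, dotProduct] at h0
        have h1 : ∑ u : V, M w u * v u = ∑ u ∈ S, M w u * v u :=
          (Finset.sum_subset (Finset.subset_univ S)
            (fun u _ hu => by rw [hsupp u hu, mul_zero])).symm
        rw [h1, hSdef, Finset.sum_union hdisj,
          Finset.sum_image (fun i hi j hj hij =>
            hqinj i (Nat.lt_succ_iff.mp (Finset.mem_range.mp hi)) j
              (Nat.lt_succ_iff.mp (Finset.mem_range.mp hj)) hij),
          Finset.sum_pair (Ne.symm hyx)] at h0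
        exact h0
      have hrowval : ∀ i, i ≤ d →
          ∑ j ∈ Finset.range (d+1), M (q i) (q j) * v (q j) = va i + va (i+2) := by
        intro i hi
        have hterm : ∀ j ∈ Finset.range (d+1), M (q i) (q j) * v (q j)
            = (if j = i+1 then v (q j) else 0) + (if j + 1 = i then v (q j) else 0) := by
          intro j hj
          rw [Finset.mem_range] at hj
          rw [hMq i j hi (by omega)]
          by_cases hc1 : j = i + 1
          · rw [if_pos (Or.inl hc1), if_pos hc1, if_neg (by omega), one_mul, add_zero]
          · by_cases hc2 : i = j + 1
            · rw [if_pos (Or.inr hc2), if_neg hc1, if_pos (by omega), one_mul, zero_add]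
            · rw [if_neg (by tauto), if_neg hc1, if_neg (by omega), zero_mul, add_zero]
        have hA : ∑ j ∈ Finset.range (d+1), (if j = i+1 then v (q j) else 0)
            = va (i+2) := by
          rw [Finset.sum_ite_eq' (Finset.range (d+1)) (i+1) (fun j => v (q j))]
          by_cases hc : i + 1 ≤ d
          · rw [if_pos (Finset.mem_range.mpr (by omega)), hva (i+2) (by omega) (by omega)]
            norm_num
          · rw [if_neg (by simp only [Finset.mem_range]; omega), hvadef]
            simp only [if_neg (by omega : ¬(1 ≤ i+2 ∧ i + 2 ≤ d + 1))]
        have hB : ∑ j ∈ Finset.range (d+1), (if j + 1 = i then v (q j) else 0)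
            = va i := by
          rcases Nat.eq_zero_or_pos i with rfl | hipos
          · rw [Finset.sum_eq_zero (fun j _ => by rw [if_neg (by omega)]), hvadef]
            simp only [if_neg (by omega : ¬(1 ≤ 0 ∧ (0:ℕ) ≤ d + 1))]
          · have hcong : ∀ j ∈ Finset.range (d+1), (if j + 1 = i then v (q j) else 0)
                = (if j = i - 1 then v (q j) else 0) := by
              intro j _
              by_cases hc : j + 1 = i
              · rw [if_pos hc, if_pos (by omega)]
              · rw [if_neg hc, if_neg (by omega)]
            rw [Finset.sum_congr rfl hcong,
              Finset.sum_ite_eq' (Finset.range (d+1)) (i-1) (fun j => v (q j)),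
              if_pos (Finset.mem_range.mpr (by omega)), hva i (by omega) (by omega)]
        rw [Finset.sum_congr rfl hterm, Finset.sum_add_distrib, hA, hB, add_comm]
      have hxrowval :
          ∑ j ∈ Finset.range (d+1), M x (q j) * v (q j) = va (s+1) + va (s+3) := by
        have hterm : ∀ j ∈ Finset.range (d+1), M x (q j) * v (q j)
            = (if j = s then v (q j) else 0) + (if j = s+2 then v (q j) else 0) := by
          intro j hj
          rw [Finset.mem_range] at hj
          rw [hMxq j (by omega)]
          by_cases hc1 : j = s
          · rw [if_pos (Or.inl hc1), if_pos hc1, if_neg (by omega), one_mul, add_zero]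
          · by_cases hc2 : j = s+2
            · rw [if_pos (Or.inr hc2), if_neg hc1, if_pos hc2, one_mul, zero_add]
            · rw [if_neg (by tauto), if_neg hc1, if_neg hc2, zero_mul, add_zero]
        rw [Finset.sum_congr rfl hterm, Finset.sum_add_distrib,
          Finset.sum_ite_eq' (Finset.range (d+1)) s (fun j => v (q j)),
          Finset.sum_ite_eq' (Finset.range (d+1)) (s+2) (fun j => v (q j)),
          if_pos (Finset.mem_range.mpr (by omega)),
          if_pos (Finset.mem_range.mpr (by omega)),
          hva (s+1) (by omega) (by omega), hva (s+3) (by omega) (by omega)]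
        norm_num
      -- step 1 : v y = 0
      have hvy : v y = 0 := by
        have hEx := hsum x
        have hEm := hsum (q (s+1))
        rw [hxrowval, hMxx, zero_mul, zero_add] at hEx
        rw [hrowval (s+1) (by omega)] at hEm
        have hMsx : M (q (s+1)) x = 0 := by
          rw [hMsymm, hMxq (s+1) (by omega), if_neg (by omega)]
        rw [hMsx, zero_mul, zero_add] at hEm
        have hEm' : va (s+1) + va (s+3) + M (q (s+1)) y * v y = 0 := hEm
        have hsub : (M x y - M (q (s+1)) y) * v y = 0 := by
          rw [sub_mul]
          linarith [hEx, hEm']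
        exact (mul_eq_zero.mp hsub).resolve_left hwitne
      -- step 2 : path recurrence
      have heqP : ∀ i, i ≤ d → va i + va (i+2) + (if i = s ∨ i = s+2 then b else 0) = 0 := by
        intro i hi
        have h := hsum (q i)
        rw [hrowval i hi, hvy, mul_zero, add_zero] at h
        have h2 : M (q i) x = if i = s ∨ i = s+2 then (1:ℝ) else 0 := by
          rw [hMsymm]
          exact hMxq i hi
        rw [h2, ite_mul, one_mul, zero_mul] at h
        exact h
      have hva0 : va 0 = 0 := by rw [hvadef]; simp
      have hva1 : va 1 = 0 := by
        rw [hva 1 (by omega) (by omega)]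
        simpa using hv0
      have hpattern := rec2_aux d s va b hva0 hva1 heqP
      -- step 3 : b = 0 via the y equation
      have hb : b = 0 := by
        have hEy := hsum y
        have hyrowval : ∑ j ∈ Finset.range (d+1), M y (q j) * v (q j)
            = M y (q (s+1)) * (-b) := by
          rw [Finset.sum_eq_single (s+1)]
          · congr 1
            have := hpattern (s+2) (by omega)
            rw [hva (s+2) (by omega) (by omega)] at this
            rw [if_pos rfl] at this
            simpa using this
          · intro j hj hne
            rw [Finset.mem_range] at hj
            have := hpattern (j+1) (by omega)
            rw [hva (j+1) (by omega) (by omega)] at this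
            rw [if_neg (by omega)] at this
            simp only [Nat.add_sub_cancel] at this
            rw [this, mul_zero]
          · intro hcon
            exact absurd (Finset.mem_range.mpr (by omega)) hcon
        have hMyy : M y y = 0 := by rw [hMdef, if_neg (G.irrefl)]
        rw [hyrowval, hMyy, zero_mul, add_zero] at hEy
        have hsymm1 : M y x = M x y := hMsymm y x
        have hsymm2 : M y (q (s+1)) = M (q (s+1)) y := hMsymm y (q (s+1))
        rw [hsymm1, hsymm2] at hEy
        have hsub : (M x y - M (q (s+1)) y) * b = 0 := by
          rw [sub_mul]
          linarith [hEy]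
        exact (mul_eq_zero.mp hsub).resolve_left hwitne
      -- step 4 : everything vanishes
      have hvall : ∀ j, va j = 0 := by
        intro j
        by_cases hj : j ≤ d + 2
        · rw [hpattern j hj]
          split_ifs
          · rw [hb, neg_zero]
          · rfl
        · rw [hvadef]
          simp only [if_neg (by omega : ¬(1 ≤ j ∧ j ≤ d + 1))]
      funext w
      by_cases hw : w ∈ S
      · rw [hSdef, Finset.mem_union] at hw
        rcases hw with hw | hw
        · rw [Finset.mem_image] at hw
          obtain ⟨j, hj, rfl⟩ := hw
          rw [Finset.mem_range] at hj
          have := hvall (j+1)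
          rw [hva (j+1) (by omega) (by omega)] at this
          simpa using this
        · rw [Finset.mem_insert, Finset.mem_singleton] at hw
          rcases hw with rfl | rfl
          · exact hb
          · exact hvy
      · exact hsupp w hw
    -- conclude contradiction in case 2
    have hrank := finrank_ker_le_aux M S (q 0) hkey
    have hcompl : Sᶜ.card = Fintype.card V - S.card := Finset.card_compl S
    have hSle : S.card ≤ Fintype.card V := Finset.card_le_univ S
    rw [hnull'] at hrank
    omega
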